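/- arXiv:1604.07774 — 4 statements merged into one kernel-verified Lean document; each statement's English description precedes it below -/
import Mathlib

section
/- For every prime p not dividing 11, the number of points (including the point at infinity) on the elliptic curve y² + y = x³ - x² - 10x - 20 over the field with p elements is divisible by 5. -/
open WeierstrassCurve WeierstrassCurve.Affine

noncomputable section

def Ecrv (p : ℕ) : WeierstrassCurve.Affine (ZMod p) :=
  { a₁ := 0, a₂ := -1, a₃ := 1, a₄ := -10, a₆ := -20 }

variable {p : ℕ} [Fact p.Prime]

lemma Ecrv_Δ_ne (h11 : (11 : ZMod p) ≠ 0) : (Ecrv p).Δ ≠ 0 := by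
  have : (Ecrv p).Δ = -(11 ^ 5 : ZMod p) := by
    simp only [Ecrv, WeierstrassCurve.Δ, b₂, b₄, b₆, b₈]; ring
  rw [this, neg_ne_zero]
  exact pow_ne_zero _ h11

lemma Ecrv_equation_iff (x y : ZMod p) :
    (Ecrv p).Equation x y ↔ y ^ 2 + y = x ^ 3 - x ^ 2 - 10 * x - 20 := by
  rw [equation_iff]
  simp only [Ecrv]
  constructor <;> intro h <;> linear_combination h

lemma Ecrv_ns (h11 : (11 : ZMod p) ≠ 0) {x y : ZMod p} (h : (Ecrv p).Equation x y) :
    (Ecrv p).Nonsingular x y :=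
  ((Ecrv p).equation_iff_nonsingular_of_Δ_ne_zero (Ecrv_Δ_ne h11)).mp h

lemma hP (h11 : (11 : ZMod p) ≠ 0) : (Ecrv p).Nonsingular 5 5 := by
  apply Ecrv_ns h11
  rw [Ecrv_equation_iff]; ring

lemma hQ (h11 : (11 : ZMod p) ≠ 0) : (Ecrv p).Nonsingular 16 (-61) := by
  apply Ecrv_ns h11
  rw [Ecrv_equation_iff]; ring

lemma hP' (h11 : (11 : ZMod p) ≠ 0) : (Ecrv p).Nonsingular 5 (-6) := by
  apply Ecrv_ns h11
  rw [Ecrv_equation_iff]; ring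

lemma some_eq_some {F : Type*} [Field F] {W : Affine F} {x y x' y' : F}
    (hx : x = x') (hy : y = y') (h : W.Nonsingular x y) (h' : W.Nonsingular x' y') :
    Point.some _ _ h = Point.some _ _ h' := by subst hx; subst hy; rfl

lemma Ecrv_negY (x y : ZMod p) : (Ecrv p).negY x y = -y - 1 := by
  simp only [negY, Ecrv]; ring

lemma two_smul_P (h11 : (11 : ZMod p) ≠ 0) :
    Point.some _ _ (hP h11) + Point.some _ _ (hP h11) = Point.some _ _ (hQ h11) := by
  have hy : (5 : ZMod p) ≠ (Ecrv p).negY 5 5 := by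
    rw [Ecrv_negY]
    intro hh
    apply h11
    linear_combination hh
  rw [Point.add_self_of_Y_ne hy]
  have hslope : (Ecrv p).slope 5 5 5 5 = 5 := by
    rw [slope_of_Y_ne rfl hy, Ecrv_negY]
    simp only [Ecrv]
    rw [div_eq_iff (show (5 : ZMod p) - (-5 - 1) ≠ 0 by
      intro hh; apply h11; linear_combination hh)]
    ring
  apply some_eq_some
  · rw [addX, hslope]; simp only [Ecrv]; ring
  · rw [addY, negAddY, addX, hslope, Ecrv_negY]; simp only [Ecrv]; ring

lemma two_smul_Q (h11 : (11 : ZMod p) ≠ 0) :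
    Point.some _ _ (hQ h11) + Point.some _ _ (hQ h11) = Point.some _ _ (hP' h11) := by
  have hy : (-61 : ZMod p) ≠ (Ecrv p).negY 16 (-61) := by
    rw [Ecrv_negY]
    intro hh
    apply h11
    have : (121 : ZMod p) = 0 := by linear_combination -hh
    have h2 : (11 : ZMod p) * 11 = 0 := by linear_combination this
    rcases mul_eq_zero.mp h2 with h' | h' <;> exact h'
  rw [Point.add_self_of_Y_ne hy]
  have hslope : (Ecrv p).slope 16 16 (-61) (-61) = -6 := by
    rw [slope_of_Y_ne rfl hy, Ecrv_negY]
    simp only [Ecrv]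
    rw [div_eq_iff (show (-61 : ZMod p) - (-(-61) - 1) ≠ 0 by
      intro hh
      apply h11
      have h2 : (11 : ZMod p) * 11 = 0 := by linear_combination -hh
      rcases mul_eq_zero.mp h2 with h' | h' <;> exact h')]
    ring
  apply some_eq_some
  · rw [addX, hslope]; simp only [Ecrv]; ring
  · rw [addY, negAddY, addX, hslope, Ecrv_negY]; simp only [Ecrv]; ring

lemma five_smul_P (h11 : (11 : ZMod p) ≠ 0) :
    (5 : ℕ) • Point.some _ _ (hP h11) = 0 := by
  have h4 : (4 : ℕ) • Point.some _ _ (hP h11) = Point.some _ _ (hP' h11) := by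
    have : (4 : ℕ) • Point.some _ _ (hP h11) =
        (Point.some _ _ (hP h11) + Point.some _ _ (hP h11)) +
        (Point.some _ _ (hP h11) + Point.some _ _ (hP h11)) := by
      rw [show (4 : ℕ) • Point.some _ _ (hP h11) = (2 + 2 : ℕ) • Point.some _ _ (hP h11) from rfl, add_nsmul, two_nsmul]
    rw [this, two_smul_P h11, two_smul_Q h11]
  have : (5 : ℕ) • Point.some _ _ (hP h11) =
      (4 : ℕ) • Point.some _ _ (hP h11) + Point.some _ _ (hP h11) := by
    rw [show (5 : ℕ) • Point.some _ _ (hP h11) = (4 + 1 : ℕ) • Point.some _ _ (hP h11) from rfl, add_nsmul, one_nsmul]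
  rw [this, h4]
  exact Point.add_of_Y_eq rfl (by rw [Ecrv_negY]; ring)

def ptEquiv (h11 : (11 : ZMod p) ≠ 0) :
    (Ecrv p).Point ≃ Option {P : ZMod p × ZMod p //
      P.2 ^ 2 + P.2 = P.1 ^ 3 - P.1 ^ 2 - 10 * P.1 - 20} where
  toFun := fun P => match P with
    | Point.zero => none
    | @Point.some _ _ _ x y h => some ⟨(x, y), (Ecrv_equation_iff x y).mp h.1⟩
  invFun := fun P => match P with
    | none => Point.zero
    | some ⟨(x, y), hxy⟩ => Point.some _ _ (Ecrv_ns h11 ((Ecrv_equation_iff x y).mpr hxy))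
  left_inv := by rintro (_ | _) <;> rfl
  right_inv := by rintro (_ | ⟨⟨x, y⟩, hxy⟩) <;> rfl

theorem stmt_0 (p : ℕ) (hp : p.Prime) (h : ¬ (p ∣ 11)) :
    5 ∣ Nat.card {P : ZMod p × ZMod p //
      P.2 ^ 2 + P.2 = P.1 ^ 3 - P.1 ^ 2 - 10 * P.1 - 20} + 1 := by
  haveI : Fact p.Prime := ⟨hp⟩
  have h11 : (11 : ZMod p) ≠ 0 := by
    have : ((11 : ℕ) : ZMod p) ≠ 0 := by
      rw [Ne, ZMod.natCast_eq_zero_iff]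
      exact h
    simpa using this
  haveI : Finite {P : ZMod p × ZMod p //
      P.2 ^ 2 + P.2 = P.1 ^ 3 - P.1 ^ 2 - 10 * P.1 - 20} := by
    infer_instance
  have hcard : Nat.card (Ecrv p).Point = Nat.card {P : ZMod p × ZMod p //
      P.2 ^ 2 + P.2 = P.1 ^ 3 - P.1 ^ 2 - 10 * P.1 - 20} + 1 := by
    rw [Nat.card_congr (ptEquiv h11), Finite.card_option]
  rw [← hcard]
  have horder : addOrderOf (Point.some _ _ (hP h11)) = 5 := by
    have hdvd : addOrderOf (Point.some _ _ (hP h11)) ∣ 5 :=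
      addOrderOf_dvd_of_nsmul_eq_zero (five_smul_P h11)
    rcases (Nat.prime_five.eq_one_or_self_of_dvd _ hdvd) with h1 | h5
    · exfalso
      rw [AddMonoid.addOrderOf_eq_one_iff] at h1
      exact Point.some_ne_zero _ h1
    · exact h5
  rw [← horder]
  exact addOrderOf_dvd_natCard _
end
end

section
/- For every prime p not dividing 14, the number of points (including the point at infinity) on the elliptic curve y² + xy + y = x³ + 4x - 6 over the field with p elements is divisible by 6. -/
open WeierstrassCurve WeierstrassCurve.Affine

/-- The curve 14a1. -/
def Wc (R : Type*) [CommRing R] : WeierstrassCurve.Affine R := ⟨1, 0, 1, 4, -6⟩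

lemma Wc_a₁ (R : Type*) [CommRing R] : (Wc R).a₁ = 1 := rfl
lemma Wc_a₂ (R : Type*) [CommRing R] : (Wc R).a₂ = 0 := rfl
lemma Wc_a₃ (R : Type*) [CommRing R] : (Wc R).a₃ = 1 := rfl
lemma Wc_a₄ (R : Type*) [CommRing R] : (Wc R).a₄ = 4 := rfl
lemma Wc_a₆ (R : Type*) [CommRing R] : (Wc R).a₆ = -6 := rfl

lemma Wc_Δ (R : Type*) [CommRing R] : (Wc R).Δ = -21952 := by
  simp only [WeierstrassCurve.Δ, WeierstrassCurve.b₂, WeierstrassCurve.b₄, WeierstrassCurve.b₆,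
    WeierstrassCurve.b₈, Wc_a₁, Wc_a₂, Wc_a₃, Wc_a₄, Wc_a₆]
  ring

lemma Wc_equation_iff (R : Type*) [CommRing R] (x y : R) :
    (Wc R).Equation x y ↔ y ^ 2 + x * y + y = x ^ 3 + 4 * x - 6 := by
  rw [WeierstrassCurve.Affine.equation_iff]
  simp only [Wc_a₁, Wc_a₂, Wc_a₃, Wc_a₄, Wc_a₆]
  constructor <;> intro h <;> linear_combination h

lemma point_some_eq {F : Type*} [CommRing F] {W : WeierstrassCurve.Affine F}
    {x₁ y₁ x₂ y₂ : F} (hx : x₁ = x₂) (hy : y₁ = y₂) (h₁ : W.Nonsingular x₁ y₁)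
    (h₂ : W.Nonsingular x₂ y₂) :
    WeierstrassCurve.Affine.Point.some _ _ h₁ = WeierstrassCurve.Affine.Point.some _ _ h₂ := by
  subst hx; subst hy; rfl

theorem stmt_1 (p : ℕ) (hp : p.Prime) (h : ¬ (p ∣ 14)) :
    6 ∣ Nat.card {P : ZMod p × ZMod p //
      P.2 ^ 2 + P.1 * P.2 + P.2 = P.1 ^ 3 + 4 * P.1 - 6} + 1 := by
  haveI : Fact p.Prime := ⟨hp⟩
  have hp2 : (2 : ZMod p) ≠ 0 := by
    intro h2
    rw [show ((2 : ZMod p)) = ((2 : ℕ) : ZMod p) by norm_cast,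
      ZMod.natCast_eq_zero_iff] at h2
    exact h (h2.trans ⟨7, rfl⟩)
  have hp7 : (7 : ZMod p) ≠ 0 := by
    intro h7
    rw [show ((7 : ZMod p)) = ((7 : ℕ) : ZMod p) by norm_cast,
      ZMod.natCast_eq_zero_iff] at h7
    exact h (h7.trans ⟨2, rfl⟩)
  set W : WeierstrassCurve.Affine (ZMod p) := Wc (ZMod p) with hW
  have hΔ : W.Δ ≠ 0 := by
    rw [hW, Wc_Δ]
    have : (21952 : ZMod p) = 2 ^ 6 * 7 ^ 3 := by norm_num
    rw [show ((-21952 : ZMod p)) = -(2 ^ 6 * 7 ^ 3) by rw [← this]]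
    exact neg_ne_zero.mpr (mul_ne_zero (pow_ne_zero _ hp2) (pow_ne_zero _ hp7))
  have hns : ∀ x y : ZMod p, y ^ 2 + x * y + y = x ^ 3 + 4 * x - 6 → W.Nonsingular x y := by
    intro x y hxy
    exact (W.equation_iff_nonsingular_of_Δ_ne_zero hΔ).mp ((Wc_equation_iff _ x y).mpr hxy)
  -- the equivalence between points and affine solutions plus infinity
  let S := {P : ZMod p × ZMod p // P.2 ^ 2 + P.1 * P.2 + P.2 = P.1 ^ 3 + 4 * P.1 - 6}
  let e : W.Point ≃ Option S :=
    { toFun := fun P => match P with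
        | .zero => none
        | @WeierstrassCurve.Affine.Point.some _ _ _ x y hP =>
            Option.some ⟨(x, y), (Wc_equation_iff _ x y).mp
              ((W.nonsingular_iff x y).mp hP).1⟩
      invFun := fun o => match o with
        | none => .zero
        | Option.some ⟨(x, y), hxy⟩ => .some _ _ (hns x y hxy)
      left_inv := by rintro (_ | _) <;> rfl
      right_inv := by rintro (_ | ⟨⟨x, y⟩, hxy⟩) <;> rfl }
  haveI : Finite S := Subtype.finite
  haveI : Finite W.Point := Finite.of_equiv _ e.symm
  have hcard : Nat.card W.Point = Nat.card S + 1 := by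
    rw [Nat.card_congr e, Finite.card_option]
  -- point of order 2
  have h2t : W.Nonsingular 1 (-1) := hns 1 (-1) (by ring)
  have hnegY1 : (-1 : ZMod p) = W.negY 1 (-1) := by
    simp only [WeierstrassCurve.Affine.negY, hW, Wc_a₁, Wc_a₃]; ring
  have hP2 : (2 : ℕ) • (WeierstrassCurve.Affine.Point.some _ _ h2t) = 0 := by
    rw [two_nsmul]
    exact WeierstrassCurve.Affine.Point.add_self_of_Y_eq hnegY1
  have hord2 : addOrderOf (WeierstrassCurve.Affine.Point.some _ _ h2t) = 2 :=
    addOrderOf_eq_prime hP2 (WeierstrassCurve.Affine.Point.some_ne_zero h2t)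
  -- point of order 3
  have h3t : W.Nonsingular 2 2 := hns 2 2 (by ring)
  have hnegY2 : W.negY 2 2 = -5 := by
    simp only [WeierstrassCurve.Affine.negY, hW, Wc_a₁, Wc_a₃]; ring
  have hy3 : (2 : ZMod p) ≠ W.negY 2 2 := by
    rw [hnegY2]
    intro hc
    apply hp7
    linear_combination hc
  have hslope : W.slope 2 2 2 2 = 2 := by
    rw [WeierstrassCurve.Affine.slope_of_Y_ne rfl hy3, hnegY2]
    simp only [hW, Wc_a₁, Wc_a₂, Wc_a₄]
    rw [div_eq_iff (by intro hc; apply hp7; linear_combination hc)]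
    ring
  have hdbl : (WeierstrassCurve.Affine.Point.some _ _ h3t) + (WeierstrassCurve.Affine.Point.some _ _ h3t)
      = -(WeierstrassCurve.Affine.Point.some _ _ h3t) := by
    rw [WeierstrassCurve.Affine.Point.add_of_Y_ne hy3,
      WeierstrassCurve.Affine.Point.neg_some]
    apply point_some_eq
    · rw [hslope]; simp only [WeierstrassCurve.Affine.addX, hslope, hW, Wc_a₁, Wc_a₂]; ring
    · rw [hslope]; simp only [WeierstrassCurve.Affine.addY, WeierstrassCurve.Affine.negAddY,
        WeierstrassCurve.Affine.addX, WeierstrassCurve.Affine.negY, hslope, hW, Wc_a₁, Wc_a₂,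
        Wc_a₃]
      ring
  have hP3 : (3 : ℕ) • (WeierstrassCurve.Affine.Point.some _ _ h3t) = 0 := by
    have : (3 : ℕ) • (WeierstrassCurve.Affine.Point.some _ _ h3t) =
        (WeierstrassCurve.Affine.Point.some _ _ h3t + WeierstrassCurve.Affine.Point.some _ _ h3t)
          + WeierstrassCurve.Affine.Point.some _ _ h3t := by
      rw [show (3 : ℕ) = 2 + 1 by rfl, add_nsmul, two_nsmul, one_nsmul]
    rw [this, hdbl, neg_add_cancel]
  have hord3 : addOrderOf (WeierstrassCurve.Affine.Point.some _ _ h3t) = 3 :=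
    addOrderOf_eq_prime hP3 (WeierstrassCurve.Affine.Point.some_ne_zero h3t)
  have hdvd2 : 2 ∣ Nat.card W.Point := hord2 ▸ addOrderOf_dvd_natCard _
  have hdvd3 : 3 ∣ Nat.card W.Point := hord3 ▸ addOrderOf_dvd_natCard _
  have hdvd6 : 6 ∣ Nat.card W.Point :=
    Nat.Coprime.mul_dvd_of_dvd_of_dvd (by norm_num) hdvd2 hdvd3
  rwa [hcard] at hdvd6
end

section
/- For every prime p not dividing 30, the number of points (including the point at infinity) on the elliptic curve y² + xy + y = x³ + x + 2 over the field with p elements is divisible by 6. -/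
open WeierstrassCurve WeierstrassCurve.Affine WeierstrassCurve.Affine.Point

/-- The elliptic curve 30A as a Weierstrass curve. -/
noncomputable def W30 (F : Type) [Field F] : WeierstrassCurve.Affine F :=
  { a₁ := 1, a₂ := 0, a₃ := 1, a₄ := 1, a₆ := 2 }

lemma W30_equation_iff {F : Type} [Field F] (x y : F) :
    (W30 F).Equation x y ↔ y ^ 2 + x * y + y = x ^ 3 + x + 2 := by
  rw [WeierstrassCurve.Affine.equation_iff]
  simp [W30]

lemma some_congr' {F : Type} [Field F] {W : WeierstrassCurve.Affine F} {x₁ y₁ x₂ y₂ : F}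
    {h₁ : W.Nonsingular x₁ y₁} {h₂ : W.Nonsingular x₂ y₂} (hx : x₁ = x₂) (hy : y₁ = y₂) :
    Point.some _ _ h₁ = Point.some _ _ h₂ := by
  subst hx; subst hy; rfl

/-- The points of the curve are in bijection with `Option` of the affine solutions. -/
noncomputable def e30 {F : Type} [Field F] (hΔ : (W30 F).Δ ≠ 0) :
    (W30 F).Point ≃ Option {P : F × F // P.2 ^ 2 + P.1 * P.2 + P.2 = P.1 ^ 3 + P.1 + 2} where
  toFun P := match P with
    | .zero => none
    | @Point.some _ _ _ x y h => some ⟨(x, y), (W30_equation_iff x y).mp h.1⟩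
  invFun o := match o with
    | none => .zero
    | Option.some q => .some _ _ (((W30 F).equation_iff_nonsingular_of_Δ_ne_zero hΔ).mp
        ((W30_equation_iff q.1.1 q.1.2).mpr q.2))
  left_inv P := by cases P with | zero => rfl | some h => rfl
  right_inv o := by rcases o with _ | ⟨⟨x, y⟩, hxy⟩ <;> rfl

theorem stmt_3 (p : ℕ) (hp : p.Prime) (h : ¬ (p ∣ 30)) :
    6 ∣ Nat.card {P : ZMod p × ZMod p //
      P.2 ^ 2 + P.1 * P.2 + P.2 = P.1 ^ 3 + P.1 + 2} + 1 := by
  haveI : Fact p.Prime := ⟨hp⟩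
  set F := ZMod p with hF
  have key : ∀ n : ℕ, n ∣ 30 → ((n : F) = 0 → False) := by
    intro n hn hc
    rw [ZMod.natCast_eq_zero_iff] at hc
    exact h (hc.trans hn)
  have h2 : (2 : F) ≠ 0 := fun hc => key 2 (by norm_num) (by exact_mod_cast hc)
  have h3 : (3 : F) ≠ 0 := fun hc => key 3 (by norm_num) (by exact_mod_cast hc)
  have h5 : (5 : F) ≠ 0 := fun hc => key 5 (by norm_num) (by exact_mod_cast hc)
  -- discriminant
  have hΔval : (W30 F).Δ = -2160 := by
    norm_num [W30, WeierstrassCurve.Δ, WeierstrassCurve.b₂, WeierstrassCurve.b₄,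
      WeierstrassCurve.b₆, WeierstrassCurve.b₈]
  have hΔ : (W30 F).Δ ≠ 0 := by
    rw [hΔval, show (-2160 : F) = -(2 ^ 4 * 3 ^ 3 * 5) by norm_num]
    exact neg_ne_zero.mpr
      (mul_ne_zero (mul_ne_zero (pow_ne_zero _ h2) (pow_ne_zero _ h3)) h5)
  -- finiteness and the cardinality identification
  haveI : Finite (W30 F).Point := Finite.of_equiv _ (e30 hΔ).symm
  have hcard : Nat.card {P : F × F //
      P.2 ^ 2 + P.1 * P.2 + P.2 = P.1 ^ 3 + P.1 + 2} + 1 = Nat.card (W30 F).Point := by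
    rw [Nat.card_congr (e30 hΔ), Finite.card_option]
  -- the 2-torsion point (-1, 0)
  have hns2 : (W30 F).Nonsingular (-1) 0 := by
    exact ((W30 F).equation_iff_nonsingular_of_Δ_ne_zero hΔ).mp ((W30_equation_iff (-1) 0).mpr (by ring))
  have h2tor : Point.some _ _ hns2 + Point.some _ _ hns2 = 0 :=
    Point.add_self_of_Y_eq (by simp [W30])
  have hord2 : addOrderOf (Point.some _ _ hns2) = 2 :=
    addOrderOf_eq_prime (by rw [two_nsmul]; exact h2tor) (Point.some_ne_zero _)
  -- the 3-torsion point (0, 1)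
  have hns3 : (W30 F).Nonsingular 0 1 := by
    exact ((W30 F).equation_iff_nonsingular_of_Δ_ne_zero hΔ).mp ((W30_equation_iff 0 1).mpr (by ring))
  have hy : (1 : F) ≠ (W30 F).negY 0 1 := by
    simp only [W30, negY]
    intro hc
    apply h3
    linear_combination hc
  have hslope : (W30 F).slope 0 0 1 1 = 0 := by
    rw [slope_of_Y_ne rfl hy]
    norm_num [W30]
  have h2P3 : Point.some _ _ hns3 + Point.some _ _ hns3 = -Point.some _ _ hns3 := by
    rw [Point.add_self_of_Y_ne hy, Point.neg_some]
    exact some_congr' (by rw [hslope]; norm_num [W30]) (by rw [hslope]; norm_num [W30, addY, negY, negAddY, addX])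
  have h3tor : (3 : ℕ) • Point.some _ _ hns3 = 0 := by
    rw [succ_nsmul, two_nsmul, h2P3, neg_add_cancel]
  have hord3 : addOrderOf (Point.some _ _ hns3) = 3 :=
    addOrderOf_eq_prime h3tor (Point.some_ne_zero _)
  -- combine
  have hd2 : 2 ∣ Nat.card (W30 F).Point := hord2 ▸ addOrderOf_dvd_natCard _
  have hd3 : 3 ∣ Nat.card (W30 F).Point := hord3 ▸ addOrderOf_dvd_natCard _
  rw [hcard]
  exact (show Nat.Coprime 2 3 by decide).mul_dvd_of_dvd_of_dvd hd2 hd3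
end

section
/- For every prime p not dividing 38, the number of points (including the point at infinity) on the elliptic curve y² + xy + y = x³ + 9x + 90 over the field with p elements is divisible by 3. -/
open WeierstrassCurve WeierstrassCurve.Affine WeierstrassCurve.Affine.Point

private lemma some_eq_some_aux {F : Type*} [Field F] {W : WeierstrassCurve.Affine F}
    {x₁ y₁ x₂ y₂ : F} (hx : x₁ = x₂) (hy : y₁ = y₂) (h₁ : W.Nonsingular x₁ y₁)
    (h₂ : W.Nonsingular x₂ y₂) : Point.some _ _ h₁ = Point.some _ _ h₂ := by
  subst hx; subst hy; rfl

theorem stmt_5 (p : ℕ) (hp : p.Prime) (h : ¬ (p ∣ 38)) :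
    3 ∣ Nat.card {P : ZMod p × ZMod p //
      P.2 ^ 2 + P.1 * P.2 + P.2 = P.1 ^ 3 + 9 * P.1 + 90} + 1 := by
  haveI : Fact p.Prime := ⟨hp⟩
  have h2 : (2 : ZMod p) ≠ 0 := by
    have : ¬ p ∣ 2 := fun hd => h (hd.trans ⟨19, rfl⟩)
    simpa [ZMod.natCast_eq_zero_iff] using
      (not_iff_not.mpr (ZMod.natCast_eq_zero_iff 2 p)).mpr this
  have h19 : (19 : ZMod p) ≠ 0 := by
    have : ¬ p ∣ 19 := fun hd => h (hd.trans ⟨2, rfl⟩)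
    simpa [ZMod.natCast_eq_zero_iff] using
      (not_iff_not.mpr (ZMod.natCast_eq_zero_iff 19 p)).mpr this
  set W : WeierstrassCurve.Affine (ZMod p) :=
    { a₁ := 1, a₂ := 0, a₃ := 1, a₄ := 9, a₆ := 90 } with hW
  have hΔval : W.Δ = -(2 ^ 9 * 19 ^ 3) := by
    simp only [hW, WeierstrassCurve.Δ, WeierstrassCurve.b₂, WeierstrassCurve.b₄,
      WeierstrassCurve.b₆, WeierstrassCurve.b₈]
    norm_num
  have hΔ : W.Δ ≠ 0 := by
    rw [hΔval]
    exact neg_ne_zero.mpr (mul_ne_zero (pow_ne_zero _ h2) (pow_ne_zero _ h19))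
  -- the equivalence between points and Option of affine solutions
  have e : W.Point ≃ Option {P : ZMod p × ZMod p //
      P.2 ^ 2 + P.1 * P.2 + P.2 = P.1 ^ 3 + 9 * P.1 + 90} :=
    { toFun := fun P => match P with
        | WeierstrassCurve.Affine.Point.zero => none
        | @Point.some _ _ _ x y hxy => some ⟨(x, y), by
            have := (W.equation_iff x y).mp hxy.1
            simpa [hW] using this⟩
      invFun := fun Q => match Q with
        | Option.none => Point.zero
        | Option.some ⟨(x, y), hxy⟩ => Point.some _ _ ((W.equation_iff_nonsingular_of_Δ_ne_zero hΔ).mp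
            ((W.equation_iff x y).mpr (by simpa [hW] using hxy)))
      left_inv := by rintro (_ | _) <;> rfl
      right_inv := by rintro (_ | ⟨⟨x, y⟩, hxy⟩) <;> rfl }
  have hcard : Nat.card {P : ZMod p × ZMod p //
      P.2 ^ 2 + P.1 * P.2 + P.2 = P.1 ^ 3 + 9 * P.1 + 90} + 1 = Nat.card W.Point := by
    rw [Nat.card_congr e, Finite.card_option]
  rw [hcard]
  haveI : Finite W.Point := Finite.of_equiv _ e.symm
  -- the 3-torsion point (0, 9)
  have hT : W.Nonsingular 0 9 := by
    apply (W.equation_iff_nonsingular_of_Δ_ne_zero hΔ).mp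
    rw [W.equation_iff]
    simp [hW]
    norm_num
  set T : W.Point := Point.some _ _ hT with hTdef
  have hne : (9 : ZMod p) ≠ W.negY 0 9 := by
    intro heq
    apply h19
    simp only [negY, hW] at heq
    linear_combination heq
  have hL : W.slope 0 0 9 9 = 0 := by
    rw [slope_of_Y_ne rfl hne]
    simp [hW]
  have hx' : W.addX 0 0 (W.slope 0 0 9 9) = 0 := by
    rw [hL]; simp [hW]
  have hy' : W.addY 0 0 9 (W.slope 0 0 9 9) = W.negY 0 9 := by
    rw [hL]; simp [hW, addY, negAddY, negY]
  have key : T + T = -T := by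
    rw [hTdef, Point.add_self_of_Y_ne hne, Point.neg_some]
    exact some_eq_some_aux hx' hy' _ _
  have h3T : (3 : ℕ) • T = 0 := by
    rw [show (3 : ℕ) = 2 + 1 from rfl, add_nsmul, two_nsmul, one_nsmul, key, neg_add_cancel]
  have hT0 : T ≠ 0 := Point.some_ne_zero hT
  have hord : addOrderOf T = 3 := by
    have hdvd : addOrderOf T ∣ 3 := addOrderOf_dvd_of_nsmul_eq_zero h3T
    rcases (Nat.prime_three.eq_one_or_self_of_dvd _ hdvd) with h1 | h3
    · exact absurd (AddMonoid.addOrderOf_eq_one_iff.mp h1) hT0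
    · exact h3
  calc (3 : ℕ) = addOrderOf T := hord.symm
    _ ∣ Nat.card W.Point := addOrderOf_dvd_natCard T
end
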